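/- Let p be a prime and A a ℤ/pℤ-graded commutative ring with components A_i. Suppose that Σ_{i=1}^{p−1} A_i·A_{p−i} = A_0. Then for every d ∈ {1, …, p−1}, the additive subgroup of A generated by all p-fold products a_1⋯a_p with each a_j ∈ A_d equals A_0 (that is, A_d^p = A_0). -/

import Mathlib

section Aux

variable {A : Type*} [CommRing A] {p : ℕ} (𝒜 : ZMod p → Submodule ℤ A) [GradedRing 𝒜]

private theorem aux_mul_le (x y : ZMod p) : 𝒜 x * 𝒜 y ≤ 𝒜 (x + y) :=
  Submodule.mul_le.2 fun _ ha _ hb => SetLike.mul_mem_graded ha hb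

private theorem aux_one_le : (1 : Submodule ℤ A) ≤ 𝒜 0 := by
  rw [Submodule.one_le]; exact SetLike.one_mem_graded 𝒜

private theorem aux_pow_le (x : ZMod p) (n : ℕ) : 𝒜 x ^ n ≤ 𝒜 (n • x) := by
  induction n with
  | zero => simpa using aux_one_le 𝒜
  | succ n ih =>
    calc 𝒜 x ^ (n + 1) = 𝒜 x ^ n * 𝒜 x := pow_succ _ _
      _ ≤ 𝒜 (n • x) * 𝒜 x := mul_le_mul' ih le_rfl
      _ ≤ 𝒜 (n • x + x) := aux_mul_le 𝒜 _ _
      _ = 𝒜 ((n + 1) • x) := by rw [succ_nsmul]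

private theorem aux_pow_mono {P Q : Submodule ℤ A} (h : P ≤ Q) (n : ℕ) : P ^ n ≤ Q ^ n := by
  induction n with
  | zero => simp
  | succ n ih =>
    rw [pow_succ, pow_succ]; exact mul_le_mul' ih h

/-- Key combinatorial lemma: for nonzero `i`, high powers of `𝒜 i * 𝒜 (-i)` land in `𝒜 d ^ p`. -/
private theorem aux_key (hp : p.Prime) (d i : ZMod p) (hd : d ≠ 0) (hi : i ≠ 0)
    (N : ℕ) (hN : (p - 1) * (p - 1) ≤ N) : (𝒜 i * 𝒜 (-i)) ^ N ≤ 𝒜 d ^ p := by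
  haveI := Fact.mk hp
  set k : ℕ := (d * i⁻¹).val with hkdef
  have hki : (k : ZMod p) = d * i⁻¹ := by
    simp [hkdef, ZMod.natCast_val, ZMod.cast_id]
  have hkiu : (k : ZMod p) * i = d := by
    rw [hki, mul_assoc, inv_mul_cancel₀ hi, mul_one]
  have hkle : k ≤ p - 1 := by
    have := ZMod.val_lt (d * i⁻¹)
    omega
  have hNk : (p - 1) * k ≤ N := le_trans (Nat.mul_le_mul_left _ hkle) hN
  have hcast : ((N - (p - 1) * k : ℕ) : ZMod p) * i + (N : ℕ) • (-i) = d := by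
    rw [Nat.cast_sub hNk, nsmul_eq_mul]
    have hp1 : ((p - 1 : ℕ) : ZMod p) = -1 := by
      rw [Nat.cast_sub hp.one_le]; simp
    push_cast
    rw [hp1]
    ring_nf
    exact hkiu
  have h1 : 𝒜 i ^ ((p - 1) * k) ≤ 𝒜 d ^ (p - 1) := by
    rw [mul_comm (p-1) k, pow_mul]
    refine le_trans (aux_pow_mono ?_ (p - 1)) le_rfl
    calc 𝒜 i ^ k ≤ 𝒜 (k • i) := aux_pow_le 𝒜 i k
      _ = 𝒜 d := by rw [nsmul_eq_mul, hkiu]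
  have h2 : 𝒜 i ^ (N - (p - 1) * k) * 𝒜 (-i) ^ N ≤ 𝒜 d := by
    calc 𝒜 i ^ (N - (p - 1) * k) * 𝒜 (-i) ^ N
        ≤ 𝒜 ((N - (p - 1) * k) • i) * 𝒜 (N • (-i)) :=
          mul_le_mul' (aux_pow_le 𝒜 _ _) (aux_pow_le 𝒜 _ _)
      _ ≤ 𝒜 ((N - (p - 1) * k) • i + N • (-i)) := aux_mul_le 𝒜 _ _
      _ = 𝒜 d := by rw [nsmul_eq_mul (N - (p-1)*k)]; rw [hcast]
  calc (𝒜 i * 𝒜 (-i)) ^ N = 𝒜 i ^ N * 𝒜 (-i) ^ N := mul_pow _ _ _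
    _ = 𝒜 i ^ ((p - 1) * k) * (𝒜 i ^ (N - (p - 1) * k) * 𝒜 (-i) ^ N) := by
        rw [← mul_assoc, ← pow_add, Nat.add_sub_cancel' hNk]
    _ ≤ 𝒜 d ^ (p - 1) * 𝒜 d := mul_le_mul' h1 h2
    _ = 𝒜 d ^ p := by rw [← pow_succ, Nat.sub_add_cancel hp.one_le]

end Aux

section Gen

variable {A : Type*} [CommRing A]

private theorem aux_natCast_le_one (n : ℕ) : (n : Submodule ℤ A) ≤ 1 := by
  induction n with
  | zero => simp
  | succ n ih =>
    push_cast
    rw [Submodule.add_eq_sup]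
    exact sup_le ih le_rfl

private theorem aux_sum_le {ι : Type*} (s : Finset ι) (f : ι → Submodule ℤ A)
    (Z : Submodule ℤ A) (hf : ∀ i ∈ s, f i ≤ Z) : ∑ i ∈ s, f i ≤ Z := by
  classical
  induction s using Finset.induction with
  | empty => simp
  | insert _ _ ha ih =>
    rw [Finset.sum_insert ha, Submodule.add_eq_sup]
    exact sup_le (hf _ (Finset.mem_insert_self _ _))
      (ih fun i hi => hf i (Finset.mem_insert_of_mem hi))

private theorem aux_pow_Z (Z : Submodule ℤ A) (hZ1 : (1 : Submodule ℤ A) ≤ Z)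
    (hZZ : Z * Z ≤ Z) {r : Submodule ℤ A} (hr : r ≤ Z) (e : ℕ) : r ^ e ≤ Z := by
  induction e with
  | zero => simpa using hZ1
  | succ e ih =>
    rw [pow_succ]
    exact le_trans (mul_le_mul' ih hr) hZZ

/-- Main combinatorial expansion: a big power of a finite sum is inside `I`. -/
private theorem aux_sum_pow {ι : Type*} (I Z : Submodule ℤ A)
    (hZ1 : (1 : Submodule ℤ A) ≤ Z) (hZZ : Z * Z ≤ Z) (hIZ : I * Z ≤ I) (B : ℕ)
    (s : Finset ι) (f : ι → Submodule ℤ A)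
    (hf : ∀ i ∈ s, f i ≤ Z) (hfB : ∀ i ∈ s, ∀ j, B ≤ j → f i ^ j ≤ I) :
    (∑ i ∈ s, f i) ^ (B * s.card + 1) ≤ I := by
  classical
  induction s using Finset.induction with
  | empty => simp
  | @insert a s' ha ih =>
    have hfa : f a ≤ Z := hf _ (Finset.mem_insert_self _ _)
    have hr : ∑ i ∈ s', f i ≤ Z :=
      aux_sum_le s' f Z fun i hi => hf i (Finset.mem_insert_of_mem hi)
    have hIH : (∑ i ∈ s', f i) ^ (B * s'.card + 1) ≤ I :=
      ih (fun i hi => hf i (Finset.mem_insert_of_mem hi))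
        (fun i hi => hfB i (Finset.mem_insert_of_mem hi))
    have hZI : Z * I ≤ I := by rw [mul_comm]; exact hIZ
    set M := B * (insert a s').card + 1 with hM
    have hMcard : M = B * s'.card + B + 1 := by
      rw [hM, Finset.card_insert_of_notMem ha]; ring
    rw [Finset.sum_insert ha, add_pow]
    apply aux_sum_le
    intro j hj
    have hterm : f a ^ j * (∑ i ∈ s', f i) ^ (M - j) * (M.choose j : Submodule ℤ A)
        ≤ f a ^ j * (∑ i ∈ s', f i) ^ (M - j) := by
      calc f a ^ j * (∑ i ∈ s', f i) ^ (M - j) * (M.choose j : Submodule ℤ A)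
          ≤ f a ^ j * (∑ i ∈ s', f i) ^ (M - j) * 1 :=
            mul_le_mul' le_rfl (aux_natCast_le_one _)
        _ = f a ^ j * (∑ i ∈ s', f i) ^ (M - j) := mul_one _
    refine le_trans hterm ?_
    by_cases hjB : B ≤ j
    · -- f a ^ j ≤ I
      have h1 : f a ^ j ≤ I := hfB a (Finset.mem_insert_self _ _) j hjB
      have h2 : (∑ i ∈ s', f i) ^ (M - j) ≤ Z := aux_pow_Z Z hZ1 hZZ hr _
      exact le_trans (mul_le_mul' h1 h2) hIZ
    · -- use IH: M - j ≥ B * s'.card + 1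
      push_neg at hjB
      have hjM : B * s'.card + 1 ≤ M - j := by
        rw [hMcard]
        have hjM' : j ≤ M := by rw [hMcard]; omega
        omega
      have h1 : (∑ i ∈ s', f i) ^ (M - j) ≤ I := by
        have : (∑ i ∈ s', f i) ^ (M - j)
            = (∑ i ∈ s', f i) ^ (B * s'.card + 1)
              * (∑ i ∈ s', f i) ^ (M - j - (B * s'.card + 1)) := by
          rw [← pow_add, Nat.add_sub_cancel' hjM]
        rw [this]
        exact le_trans (mul_le_mul' hIH (aux_pow_Z Z hZ1 hZZ hr _)) hIZ
      have h2 : f a ^ j ≤ Z := aux_pow_Z Z hZ1 hZZ hfa j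
      exact le_trans (mul_le_mul' h2 h1) hZI

end Gen

/-- For a `ℤ/pℤ`-graded commutative ring `A` with components `𝒜 i` such that
`Σ_{i=1}^{p-1} 𝒜 i · 𝒜 (p-i) = 𝒜 0`, for every `d ∈ {1, …, p-1}` the additive subgroup
generated by `p`-fold products of elements of `𝒜 d` equals `𝒜 0`, i.e. `(𝒜 d)^p = 𝒜 0`. -/
theorem component_pow_eq_degree_zero
    {A : Type*} [CommRing A] {p : ℕ} (hp : p.Prime)
    (𝒜 : ZMod p → Submodule ℤ A) [GradedRing 𝒜]
    (h : ∑ i ∈ Finset.Icc 1 (p - 1), 𝒜 (i : ZMod p) * 𝒜 ((p - i : ℕ) : ZMod p)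
        = 𝒜 (0 : ZMod p)) :
    ∀ d ∈ Finset.Icc 1 (p - 1), 𝒜 (d : ZMod p) ^ p = 𝒜 (0 : ZMod p) := by
  haveI := Fact.mk hp
  have hp1 : 1 ≤ p := hp.one_le
  intro d hd
  rw [Finset.mem_Icc] at hd
  have hdp : d < p := by omega
  have hd0 : (d : ZMod p) ≠ 0 := by
    rw [Ne, ZMod.natCast_eq_zero_iff]
    intro hdvd
    have := Nat.le_of_dvd (by omega) hdvd
    omega
  set D : ZMod p := ((d : ℕ) : ZMod p) with hD
  -- basic facts about 𝒜 0
  have hZZ : 𝒜 (0 : ZMod p) * 𝒜 0 ≤ 𝒜 0 := by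
    have := aux_mul_le 𝒜 (0 : ZMod p) 0
    rwa [add_zero] at this
  have hZ1 : (1 : Submodule ℤ A) ≤ 𝒜 0 := aux_one_le 𝒜
  -- I * Z ≤ I
  have hIZ : 𝒜 D ^ p * 𝒜 0 ≤ 𝒜 D ^ p := by
    calc 𝒜 D ^ p * 𝒜 0 = 𝒜 D ^ (p - 1) * 𝒜 D * 𝒜 0 := by
          rw [← pow_succ, Nat.sub_add_cancel hp1]
      _ = 𝒜 D ^ (p - 1) * (𝒜 D * 𝒜 0) := mul_assoc _ _ _
      _ ≤ 𝒜 D ^ (p - 1) * 𝒜 D := by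
          refine mul_le_mul' le_rfl ?_
          have := aux_mul_le 𝒜 D 0
          rwa [add_zero] at this
      _ = 𝒜 D ^ p := by rw [← pow_succ, Nat.sub_add_cancel hp1]
  -- the upper bound : 𝒜 D ^ p ≤ 𝒜 0
  have hub : 𝒜 D ^ p ≤ 𝒜 0 := by
    have := aux_pow_le 𝒜 D p
    rwa [nsmul_eq_mul, ZMod.natCast_self, zero_mul] at this
  -- each summand is ≤ 𝒜 0
  set f : ℕ → Submodule ℤ A := fun i => 𝒜 (i : ZMod p) * 𝒜 ((p - i : ℕ) : ZMod p) with hf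
  have hfZ : ∀ i ∈ Finset.Icc 1 (p - 1), f i ≤ 𝒜 0 := by
    intro i hi
    rw [Finset.mem_Icc] at hi
    have hip : i ≤ p := by omega
    have : ((i : ZMod p) + ((p - i : ℕ) : ZMod p)) = 0 := by
      rw [Nat.cast_sub hip, ZMod.natCast_self]
      ring
    calc f i ≤ 𝒜 ((i : ZMod p) + ((p - i : ℕ) : ZMod p)) := aux_mul_le 𝒜 _ _
      _ = 𝒜 0 := by rw [this]
  -- each summand's large powers are ≤ 𝒜 D ^ p
  have hfB : ∀ i ∈ Finset.Icc 1 (p - 1), ∀ j, (p - 1) * (p - 1) ≤ j → f i ^ j ≤ 𝒜 D ^ p := by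
    intro i hi j hj
    rw [Finset.mem_Icc] at hi
    have hip : i ≤ p := by omega
    have hi0 : (i : ZMod p) ≠ 0 := by
      rw [Ne, ZMod.natCast_eq_zero_iff]
      intro hdvd
      have := Nat.le_of_dvd (by omega) hdvd
      omega
    have hneg : ((p - i : ℕ) : ZMod p) = -(i : ZMod p) := by
      rw [Nat.cast_sub hip, ZMod.natCast_self]
      ring
    have := aux_key 𝒜 hp D (i : ZMod p) hd0 hi0 j hj
    rw [hf]
    simpa [hneg] using this
  -- 𝒜 0 is idempotent
  have hZpow : ∀ n : ℕ, 𝒜 (0 : ZMod p) ^ (n + 1) = 𝒜 0 := by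
    intro n
    induction n with
    | zero => simp
    | succ n ih =>
      rw [pow_succ, ih]
      refine le_antisymm hZZ ?_
      intro x hx
      have := Submodule.mul_mem_mul hx (SetLike.one_mem_graded 𝒜)
      rwa [mul_one] at this
  -- assemble
  refine le_antisymm hub ?_
  have key := aux_sum_pow (𝒜 D ^ p) (𝒜 0) hZ1 hZZ hIZ ((p - 1) * (p - 1))
    (Finset.Icc 1 (p - 1)) f hfZ hfB
  calc 𝒜 (0 : ZMod p)
      = 𝒜 (0 : ZMod p) ^ ((p - 1) * (p - 1) * (Finset.Icc 1 (p - 1)).card + 1) :=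
        (hZpow _).symm
    _ = (∑ i ∈ Finset.Icc 1 (p - 1), f i) ^ ((p - 1) * (p - 1) * (Finset.Icc 1 (p - 1)).card + 1) := by
        rw [← h]
    _ ≤ 𝒜 D ^ p := key
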